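/- The bilinear form φ satisfies the twisted 2-cocycle condition: for all finitely supported functions u, v, w : ℤ → ℝ, φ(B(v,w), Γu) + φ(B(w,u), Γv) + φ(B(u,v), Γw) = 0. (Together with antisymmetry, this is the assertion of Theorem 3.1 that φ is a cocycle on the q-deformed Witt algebra.) -/

import Mathlib

/-- The q-integer `[m] = (q^m - q^(-m))/(q - q⁻¹)`, for real `q`. -/
noncomputable def qInt (q : ℝ) (m : ℤ) : ℝ := (q ^ m - q ^ (-m)) / (q - q⁻¹)

/-- `⟨m⟩ = q^m + q^(-m)`, for real `q`. -/
noncomputable def qBra (q : ℝ) (m : ℤ) : ℝ := q ^ m + q ^ (-m)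

/-- `γ_m = [m+1][m][m−1]/([2][3]⟨m⟩)`. -/
noncomputable def qGamma (q : ℝ) (m : ℤ) : ℝ :=
  qInt q (m + 1) * qInt q m * qInt q (m - 1) / (qInt q 2 * qInt q 3 * qBra q m)

/-- The bracket on coefficient sequences:
`B(v,w)(s) = Σ_{n+m+1=s} [n−m]·v(n+1)·w(m+1)`.  (With `i = n+1`, `j = m+1`, the
basis term `z^{i}∂_q` bracketed with `z^{j}∂_q` contributes
`[i−j]·v(i)·w(j)` at position `s = i+j−1`.) -/
noncomputable def B (q : ℝ) (v w : ℤ →₀ ℝ) : ℤ →₀ ℝ :=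
  v.sum fun i a => w.sum fun j b => Finsupp.single (i + j - 1) (qInt q (i - j) * a * b)

/-- The twist `Γ(u)(k) = ⟨k−1⟩·u(k)` (so that `Γ(d_p) = ⟨p⟩·d_p` on basis fields). -/
noncomputable def Gam (q : ℝ) (u : ℤ →₀ ℝ) : ℤ →₀ ℝ :=
  u.sum fun k a => Finsupp.single k (qBra q (k - 1) * a)

/-- The pairing `φ(v, w) = Σ_{n∈ℤ} v(n+1)·w(1−n)·γ_n` (a finite sum). -/
noncomputable def phi (q : ℝ) (v w : ℤ →₀ ℝ) : ℝ :=
  ∑ᶠ n : ℤ, v (n + 1) * w (1 - n) * qGamma q n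

section
variable {q : ℝ} (hq : 0 < q) (hq1 : q ≠ 1)
include hq hq1

lemma hd : q - q⁻¹ ≠ 0 := by
  intro h
  have hq0 : q ≠ 0 := ne_of_gt hq
  have : q * q = 1 := by field_simp at h; nlinarith [sq_nonneg q]
  have : q = 1 := by nlinarith
  exact hq1 this

lemma qBra_pos (s : ℤ) : 0 < qBra q s := by
  unfold qBra; positivity

lemma qBra_neg' (s : ℤ) : qBra q (-s) = qBra q s := by
  unfold qBra; rw [neg_neg]; ring

lemma qGamma_neg (s : ℤ) : qGamma q (-s) = -qGamma q s := by
  have h1 : ∀ t : ℤ, qInt q (-t) = -qInt q t := by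
    intro t; unfold qInt; rw [neg_neg]; ring
  unfold qGamma
  rw [show -s + 1 = -(s-1) by ring, show -s - 1 = -(s+1) by ring, h1, h1, h1,
    qBra_neg' hq hq1]
  ring

lemma qInt2_ne : qInt q 2 ≠ 0 := by
  have hq0 : q ≠ 0 := ne_of_gt hq
  have h : qInt q 2 = q + q⁻¹ := by
    unfold qInt
    rw [show (2:ℤ) = 1+1 by norm_num, zpow_neg, zpow_add₀ hq0, zpow_one,
      div_eq_iff (hd hq hq1)]
    field_simp
    ring
  rw [h]; positivity

lemma qInt3_ne : qInt q 3 ≠ 0 := by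
  have hq0 : q ≠ 0 := ne_of_gt hq
  have h : qInt q 3 = q*q + 1 + q⁻¹*q⁻¹ := by
    unfold qInt
    rw [show (3:ℤ) = 1+1+1 by norm_num, zpow_neg, zpow_add₀ hq0, zpow_add₀ hq0, zpow_one,
      div_eq_iff (hd hq hq1)]
    field_simp
    ring
  rw [h]; positivity

lemma bra_gamma (s : ℤ) :
    qBra q s * qGamma q s = qInt q (s+1) * qInt q s * qInt q (s-1) / (qInt q 2 * qInt q 3) := by
  unfold qGamma
  rw [mul_div_assoc', mul_comm (qInt q 2 * qInt q 3) (qBra q s),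
    mul_div_mul_left _ _ (ne_of_gt (qBra_pos hq hq1 s))]

set_option maxHeartbeats 2000000 in
lemma key (i j p : ℤ) (h : i + j + p = 3) :
    qInt q (i-j) * (qBra q (p-1) * qGamma q (i+j-1-1))
    + qInt q (j-p) * (qBra q (i-1) * qGamma q (j+p-1-1))
    + qInt q (p-i) * (qBra q (j-1) * qGamma q (p+i-1-1)) = 0 := by
  have hq0 : q ≠ 0 := ne_of_gt hq
  have hp : p = 3 - i - j := by omega
  subst hp
  rw [show (3:ℤ) - i - j - 1 = -(i+j-1-1) by ring, qBra_neg' hq hq1,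
      show j + (3-i-j) - 1 - 1 = -(i-1) by ring,
      show (3-i-j) + i - 1 - 1 = -(j-1) by ring,
      qGamma_neg hq hq1, qGamma_neg hq hq1]
  simp only [mul_neg]
  rw [bra_gamma hq hq1, bra_gamma hq hq1, bra_gamma hq hq1,
    mul_div_assoc', mul_div_assoc', mul_div_assoc',
    ← neg_div, ← neg_div, ← add_div, ← add_div, div_eq_zero_iff]
  left
  simp only [qInt, div_eq_mul_inv, show (3:ℤ)=1+1+1 from by norm_num, zpow_neg,
    zpow_sub₀ hq0, zpow_add₀ hq0, zpow_one]
  generalize (q - q⁻¹)⁻¹ = e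
  have hi : q ^ i ≠ 0 := zpow_ne_zero _ hq0
  have hj : q ^ j ≠ 0 := zpow_ne_zero _ hq0
  field_simp
  ring

end


section plumbing
variable (q : ℝ)

lemma phi_fin (x y : ℤ →₀ ℝ) :
    (Function.support fun n => x (n + 1) * y (1 - n) * qGamma q n).Finite := by
  apply Set.Finite.subset (Set.Finite.preimage (f := fun n : ℤ => n + 1)
    (Function.Injective.injOn (add_left_injective 1)) x.finite_support)
  intro n hn
  simp only [Function.mem_support] at hn
  simp only [Set.mem_preimage, Finset.mem_coe, Finsupp.mem_support_iff]
  intro h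
  apply hn
  rw [h, zero_mul, zero_mul]

lemma phi_add_left (x x' y : ℤ →₀ ℝ) :
    phi q (x + x') y = phi q x y + phi q x' y := by
  unfold phi
  rw [← finsum_add_distrib (phi_fin q x y) (phi_fin q x' y)]
  congr 1
  funext n
  simp [Finsupp.add_apply]
  ring

lemma phi_add_right (x y y' : ℤ →₀ ℝ) :
    phi q x (y + y') = phi q x y + phi q x y' := by
  unfold phi
  rw [← finsum_add_distrib (phi_fin q x y) (phi_fin q x y')]
  congr 1
  funext n
  simp [Finsupp.add_apply]
  ring

@[simp] lemma phi_zero_left (y : ℤ →₀ ℝ) : phi q 0 y = 0 := by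
  unfold phi; simp

@[simp] lemma phi_zero_right (x : ℤ →₀ ℝ) : phi q x 0 = 0 := by
  unfold phi; simp

@[simp] lemma Gam_zero : Gam q 0 = 0 := by
  unfold Gam; simp

@[simp] lemma B_zero_left (w : ℤ →₀ ℝ) : B q 0 w = 0 := by
  unfold B; simp

@[simp] lemma B_zero_right (v : ℤ →₀ ℝ) : B q v 0 = 0 := by
  unfold B; simp

lemma Gam_add (u u' : ℤ →₀ ℝ) : Gam q (u + u') = Gam q u + Gam q u' := by
  unfold Gam
  apply Finsupp.sum_add_index' (by simp) (by intros; rw [mul_add, Finsupp.single_add])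

lemma B_add_left (v v' w : ℤ →₀ ℝ) : B q (v + v') w = B q v w + B q v' w := by
  unfold B
  apply Finsupp.sum_add_index' (by simp)
  intro i b1 b2
  rw [← Finsupp.sum_add]
  congr 1
  funext j b
  rw [← Finsupp.single_add]
  congr 1
  ring

lemma B_add_right (v w w' : ℤ →₀ ℝ) : B q v (w + w') = B q v w + B q v w' := by
  unfold B
  rw [← Finsupp.sum_add]
  congr 1
  funext i a
  apply Finsupp.sum_add_index' (by simp)
  intro j b1 b2
  rw [← Finsupp.single_add]
  congr 1
  ring

lemma B_single_single (i j : ℤ) (x y : ℝ) :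
    B q (Finsupp.single i x) (Finsupp.single j y)
      = Finsupp.single (i + j - 1) (qInt q (i - j) * x * y) := by
  unfold B
  rw [Finsupp.sum_single_index (by simp), Finsupp.sum_single_index (by simp)]

lemma Gam_single (p : ℤ) (x : ℝ) :
    Gam q (Finsupp.single p x) = Finsupp.single p (qBra q (p - 1) * x) := by
  unfold Gam
  rw [Finsupp.sum_single_index (by simp)]

lemma phi_single_single (s t : ℤ) (x y : ℝ) :
    phi q (Finsupp.single s x) (Finsupp.single t y)
      = if t = 2 - s then x * y * qGamma q (s - 1) else 0 := by
  unfold phi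
  rw [finsum_eq_single _ (s - 1) ?_]
  · rw [show s - 1 + 1 = s by ring, show 1 - (s - 1) = 2 - s by ring]
    rw [Finsupp.single_eq_same, Finsupp.single_apply]
    split_ifs with h1 <;> ring
  · intro n hn
    rw [Finsupp.single_apply, if_neg (by omega), zero_mul, zero_mul]

end plumbing

/-- The twisted 2-cocycle condition:
`φ(B(v,w), Γu) + φ(B(w,u), Γv) + φ(B(u,v), Γw) = 0`. -/
theorem phi_cocycle (q : ℝ) (hq : 0 < q) (hq1 : q ≠ 1) (u v w : ℤ →₀ ℝ) :
    phi q (B q v w) (Gam q u) + phi q (B q w u) (Gam q v)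
      + phi q (B q u v) (Gam q w) = 0 := by
  induction u using Finsupp.induction_linear with
  | zero => simp
  | add f g hf hg =>
    rw [Gam_add, phi_add_right, B_add_right, B_add_left, phi_add_left, phi_add_left]
    linarith
  | single p a =>
  induction v using Finsupp.induction_linear with
  | zero => simp
  | add f g hf hg =>
    rw [B_add_left, phi_add_left, Gam_add, phi_add_right, B_add_right, phi_add_left]
    linarith
  | single i b =>
  induction w using Finsupp.induction_linear with
  | zero => simp
  | add f g hf hg =>
    rw [B_add_right, phi_add_left, B_add_left, phi_add_left, Gam_add, phi_add_right]
    linarith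
  | single j c =>
  rw [B_single_single, B_single_single, B_single_single, Gam_single, Gam_single,
    Gam_single, phi_single_single, phi_single_single, phi_single_single]
  split_ifs with h1 h2 h3 h4 h5 h6 h7 <;> try (exfalso; omega)
  · have h : i + j + p = 3 := by omega
    have K := key hq hq1 i j p h
    rw [show i + j - 1 - 1 = i + j - 1 - 1 by ring] at K
    linear_combination (b * c * a) * K
  · ring
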